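/- Let 0 < a < b. Then (p(log b − log a)/(b^p − a^p))^{1/p} tends to 1/b as p → ∞. -/

import Mathlib

open Filter Real

/-- For `0 < a < b`,
`(p(log b − log a)/(b^p − a^p))^{1/p} → 1/b` as `p → ∞`. -/
theorem stmt14 (a b : ℝ) (ha : 0 < a) (hab : a < b) :
    Filter.Tendsto
      (fun p : ℝ => (p * (Real.log b - Real.log a) / (b ^ p - a ^ p)) ^ (1 / p))
      Filter.atTop (nhds (1 / b)) := by
  have hb : 0 < b := ha.trans hab
  have hC : 0 < Real.log b - Real.log a := sub_pos.mpr (Real.log_lt_log ha hab)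
  set C := Real.log b - Real.log a with hCdef
  have hr : 0 < a / b := div_pos ha hb
  have hr1 : a / b < 1 := (div_lt_one hb).mpr hab
  -- limit of the exponent
  have h1 : Tendsto (fun p : ℝ => Real.log (p * C) / p) atTop (nhds 0) := by
    have hlog : Tendsto (fun p : ℝ => Real.log p / p) atTop (nhds 0) :=
      Real.isLittleO_log_id_atTop.tendsto_div_nhds_zero
    have hconst : Tendsto (fun p : ℝ => Real.log C / p) atTop (nhds 0) :=
      tendsto_const_nhds.div_atTop tendsto_id
    have := hlog.add hconst
    rw [add_zero] at this
    refine this.congr' ?_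
    filter_upwards [eventually_gt_atTop (0 : ℝ)] with p hp
    rw [Real.log_mul hp.ne' hC.ne', add_div]
  have h2 : Tendsto (fun p : ℝ => (a / b) ^ p) atTop (nhds 0) :=
    tendsto_rpow_atTop_of_base_lt_one _ (by linarith) hr1
  have h3 : Tendsto (fun p : ℝ => Real.log (1 - (a / b) ^ p) / p) atTop (nhds 0) := by
    have : Tendsto (fun p : ℝ => Real.log (1 - (a / b) ^ p)) atTop (nhds 0) := by
      have hin : Tendsto (fun p : ℝ => 1 - (a / b) ^ p) atTop (nhds 1) := by
        simpa using tendsto_const_nhds.sub h2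
      have h := (Real.continuousAt_log (by norm_num : (1:ℝ) ≠ 0)).tendsto.comp hin
      simpa [Function.comp_def] using h
    have := this.div_atTop tendsto_id
    exact (this.congr (fun p => rfl)).congr' (by
      filter_upwards [eventually_gt_atTop (0:ℝ)] with p hp; rfl)
  have hexp : Tendsto (fun p : ℝ =>
      Real.log (p * C) / p - Real.log b - Real.log (1 - (a / b) ^ p) / p)
      atTop (nhds (-Real.log b)) := by
    have := (h1.sub (tendsto_const_nhds (x := Real.log b))).sub h3
    simpa using this
  have key : Tendsto (fun p : ℝ => Real.exp
      (Real.log (p * C) / p - Real.log b - Real.log (1 - (a / b) ^ p) / p))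
      atTop (nhds (1 / b)) := by
    have := (Real.continuous_exp.tendsto _).comp hexp
    simpa [Function.comp_def, Real.exp_neg, Real.exp_log hb, one_div] using this
  refine key.congr' ?_
  filter_upwards [eventually_gt_atTop (0 : ℝ)] with p hp
  have hba : a ^ p < b ^ p := Real.rpow_lt_rpow ha.le hab hp
  have hpos : 0 < b ^ p - a ^ p := sub_pos.mpr hba
  have hbp : (0:ℝ) < b ^ p := Real.rpow_pos_of_pos hb p
  have hrp : ((a / b) : ℝ) ^ p = a ^ p / b ^ p := Real.div_rpow ha.le hb.le p
  have hfac : b ^ p - a ^ p = b ^ p * (1 - (a / b) ^ p) := by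
    rw [hrp]; field_simp
  have h1m : 0 < 1 - (a / b) ^ p := by
    rw [hrp, sub_pos, div_lt_one hbp]; exact hba
  have hQ : 0 < p * C / (b ^ p - a ^ p) := div_pos (mul_pos hp hC) hpos
  rw [Real.rpow_def_of_pos hQ]
  congr 1
  rw [Real.log_div (mul_pos hp hC).ne' hpos.ne', hfac,
    Real.log_mul hbp.ne' h1m.ne', Real.log_rpow hb]
  field_simp
  ring
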